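/- Fix real numbers α, β, s, 𝒦 with s ≠ 0 and (1/12)β² − sα > 0. Let D = (1/12)β² − sα, Q₁ = −β/(6s) − √D/s and Q₂ = −Q₁ − β/(3s) (assume the sign chosen so Q₁ < Q₂), and let I = (β/(108 s²))(18 s α − β²). Then Q₁ and Q₂ are distinct real roots of the cubic I + α q + (1/2)β q² + s q³ = 0, and moreover I·Q₁ + (1/2)α Q₁² + (1/6)β Q₁³ + (s/4) Q₁⁴ = I·Q₂ + (1/2)α Q₂² + (1/6)β Q₂³ + (s/4) Q₂⁴. -/

import Mathlib

open Real

/-- Explicit conjugate periodic states: `Q₁ ≠ Q₂` are roots of the cubic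
`I + α q + ½β q² + s q³` and share the same quartic potential value. -/
theorem conjugate_states
    (α β s : ℝ) (hs : s ≠ 0)
    (D : ℝ) (hD : D = (1/12) * β^2 - s * α) (hDpos : 0 < D)
    (Q₁ Q₂ I : ℝ)
    (hQ1 : Q₁ = -β/(6*s) - Real.sqrt D / s)
    (hQ2 : Q₂ = -Q₁ - β/(3*s))
    (hord : Q₁ < Q₂)
    (hI : I = (β/(108*s^2)) * (18*s*α - β^2)) :
    Q₁ ≠ Q₂ ∧
    I + α*Q₁ + (1/2)*β*Q₁^2 + s*Q₁^3 = 0 ∧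
    I + α*Q₂ + (1/2)*β*Q₂^2 + s*Q₂^3 = 0 ∧
    I*Q₁ + (1/2)*α*Q₁^2 + (1/6)*β*Q₁^3 + (s/4)*Q₁^4
      = I*Q₂ + (1/2)*α*Q₂^2 + (1/6)*β*Q₂^3 + (s/4)*Q₂^4 := by
  have hr : Real.sqrt D ^ 2 = D := Real.sq_sqrt hDpos.le
  set r := Real.sqrt D with hrdef
  have hs2 : (s:ℝ)^2 ≠ 0 := pow_ne_zero _ hs
  have hq1 : s*Q₁ = -β/6 - r := by rw [hQ1]; field_simp
  have hq2 : s*Q₂ = -β/6 + r := by rw [hQ2, hQ1]; field_simp; ring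
  have hIs : I*s^2 = (β/108) * (18*s*α - β^2) := by rw [hI]; field_simp
  refine ⟨hord.ne, ?_, ?_, ?_⟩
  · have e : I + α*Q₁ + (1/2)*β*Q₁^2 + s*Q₁^3
        = (I*s^2 + α*s*(s*Q₁) + (1/2)*β*(s*Q₁)^2 + (s*Q₁)^3)/s^2 := by
      field_simp
    rw [e, hq1, div_eq_zero_iff]
    left
    rw [hD] at hr
    linear_combination (-r) * hr + hIs
  · have e : I + α*Q₂ + (1/2)*β*Q₂^2 + s*Q₂^3
        = (I*s^2 + α*s*(s*Q₂) + (1/2)*β*(s*Q₂)^2 + (s*Q₂)^3)/s^2 := by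
      field_simp
    rw [e, hq2, div_eq_zero_iff]
    left
    rw [hD] at hr
    linear_combination r * hr + hIs
  · have e : ∀ Q : ℝ, I*Q + (1/2)*α*Q^2 + (1/6)*β*Q^3 + (s/4)*Q^4
        = (I*s^2*(s*Q) + (1/2)*α*s*(s*Q)^2 + (1/6)*β*(s*Q)^3 + (1/4)*(s*Q)^4)/s^3 := by
      intro Q; field_simp
    rw [e Q₁, e Q₂, hq1, hq2]
    linear_combination (-2*r/s^3) * hIs
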